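/- Fix p, u and a generic tableau T(L) of height n, and let d = d_{pu}(T(L)). The number of distinct sets of the form Ω⁺_{p,u}(T(L+z)) := {(p,s,u) : l_{ps} + z_{ps} - (l_{p-1,u} + z_{p-1,u}) ∈ ℤ_{≥0}} as z ranges over ℤ^{n(n-1)/2} (with zero top row) equals d + 1. Consequently, the number of distinct sets of the form Ω⁺(T(L+z)) = ⊔_{p,u} Ω⁺_{p,u}(T(L+z)) equals ∏_{1 ≤ u ≤ p-1 < n} (d_{pu}(T(L)) + 1). -/

import Mathlib

/-- The set `Ω⁺_{p,u}(T(L+z))` of triples `(p,s,u)` with fixed `p`, `u`. -/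
def OmegaPlusPU (L : ℕ → ℕ → ℂ) (z : ℕ → ℕ → ℤ) (p u : ℕ) : Set (ℕ × ℕ × ℕ) :=
  {t | t.1 = p ∧ t.2.2 = u ∧ 1 ≤ t.2.1 ∧ t.2.1 ≤ p ∧
    ∃ m : ℕ, (L p t.2.1 + (z p t.2.1 : ℂ)) - (L (p - 1) u + (z (p - 1) u : ℂ)) = (m : ℂ)}

/-- The full set `Ω⁺(T(L+z))`. -/
def OmegaPlusFull (n : ℕ) (L : ℕ → ℕ → ℂ) (z : ℕ → ℕ → ℤ) : Set (ℕ × ℕ × ℕ) :=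
  {t | 1 < t.1 ∧ t.1 ≤ n ∧ 1 ≤ t.2.1 ∧ t.2.1 ≤ t.1 ∧ 1 ≤ t.2.2 ∧ t.2.2 ≤ t.1 - 1 ∧
    ∃ m : ℕ, (L t.1 t.2.1 + (z t.1 t.2.1 : ℂ)) -
      (L (t.1 - 1) t.2.2 + (z (t.1 - 1) t.2.2 : ℂ)) = (m : ℂ)}

/-- `d_{pu}(T(L))`: number of distinct row-`p` entries integrally linked to `l_{p-1,u}`. -/
noncomputable def dPU (L : ℕ → ℕ → ℂ) (p u : ℕ) : ℕ :=
  Nat.card {v : ℂ | ∃ s, 1 ≤ s ∧ s ≤ p ∧ L p s = v ∧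
    ∃ t : ℤ, L p s - L (p - 1) u = (t : ℂ)}

open Classical in
/-- positions in row `p` integrally linked to `l_{p-1,u}` -/
noncomputable def Sf (L : ℕ → ℕ → ℂ) (p u : ℕ) : Finset ℕ :=
  (Finset.Icc 1 p).filter (fun s => ∃ t : ℤ, L p s - L (p-1) u = (t : ℂ))

open Classical in
noncomputable def tval (L : ℕ → ℕ → ℂ) (p u s : ℕ) : ℤ :=
  if h : ∃ t : ℤ, L p s - L (p-1) u = (t : ℂ) then h.choose else 0

lemma tval_spec {L : ℕ → ℕ → ℂ} {p u s : ℕ} (h : ∃ t : ℤ, L p s - L (p-1) u = (t:ℂ)) :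
    L p s - L (p-1) u = (tval L p u s : ℂ) := by
  rw [tval, dif_pos h]; exact h.choose_spec

lemma mem_Sf {L : ℕ → ℕ → ℂ} {p u s : ℕ} :
    s ∈ Sf L p u ↔ (1 ≤ s ∧ s ≤ p) ∧ ∃ t : ℤ, L p s - L (p-1) u = (t:ℂ) := by
  simp [Sf, Finset.mem_filter, Finset.mem_Icc, and_assoc]

noncomputable def Tset (L : ℕ → ℕ → ℂ) (p u : ℕ) : Finset ℤ := (Sf L p u).image (tval L p u)

def Aset (L : ℕ → ℕ → ℂ) (p u : ℕ) (w : ℤ) : Set (ℕ × ℕ × ℕ) :=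
  {t | t.1 = p ∧ t.2.2 = u ∧ t.2.1 ∈ Sf L p u ∧ w ≤ tval L p u t.2.1}

lemma cond_iff (L : ℕ → ℕ → ℂ) (z : ℕ → ℕ → ℤ) (p u s : ℕ) :
    (∃ m : ℕ, (L p s + (z p s : ℂ)) - (L (p-1) u + (z (p-1) u : ℂ)) = (m:ℂ)) ↔
    ((∃ t : ℤ, L p s - L (p-1) u = (t:ℂ)) ∧ z (p-1) u - z p s ≤ tval L p u s) := by
  constructor
  · rintro ⟨m, hm⟩
    have hlink : ∃ t : ℤ, L p s - L (p-1) u = (t:ℂ) := by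
      refine ⟨(m : ℤ) - z p s + z (p-1) u, ?_⟩
      push_cast
      linear_combination hm
    refine ⟨hlink, ?_⟩
    have h2 := tval_spec hlink
    have : (tval L p u s : ℂ) = ((m : ℤ) - z p s + z (p-1) u : ℤ) := by
      push_cast
      linear_combination hm - h2
    have h3 : tval L p u s = (m : ℤ) - z p s + z (p-1) u := by exact_mod_cast this
    omega
  · rintro ⟨hlink, hle⟩
    have h2 := tval_spec hlink
    refine ⟨(tval L p u s + z p s - z (p-1) u).toNat, ?_⟩
    have h4 : ((tval L p u s + z p s - z (p-1) u).toNat : ℤ)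
        = tval L p u s + z p s - z (p-1) u := Int.toNat_of_nonneg (by omega)
    have : (((tval L p u s + z p s - z (p-1) u).toNat : ℤ) : ℂ)
        = ((tval L p u s + z p s - z (p-1) u : ℤ) : ℂ) := by rw [h4]
    push_cast at this ⊢
    linear_combination h2 - this

lemma PU_eq (L : ℕ → ℕ → ℂ) (z : ℕ → ℕ → ℤ) (p u : ℕ) :
    OmegaPlusPU L z p u =
      {t | t.1 = p ∧ t.2.2 = u ∧ t.2.1 ∈ Sf L p u ∧
        z (p-1) u - z p t.2.1 ≤ tval L p u t.2.1} := by
  ext t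
  simp only [OmegaPlusPU, Set.mem_setOf_eq, cond_iff L z p u t.2.1, mem_Sf]
  tauto

lemma PU_congr (L : ℕ → ℕ → ℂ) (z z' : ℕ → ℕ → ℤ) (p u : ℕ)
    (h : ∀ s ∈ Sf L p u, z p s - z (p-1) u = z' p s - z' (p-1) u) :
    OmegaPlusPU L z p u = OmegaPlusPU L z' p u := by
  rw [PU_eq, PU_eq]
  ext t
  simp only [Set.mem_setOf_eq]
  constructor
  · rintro ⟨h1, h2, h3, h4⟩
    exact ⟨h1, h2, h3, by have := h _ h3; omega⟩
  · rintro ⟨h1, h2, h3, h4⟩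
    exact ⟨h1, h2, h3, by have := h _ h3; omega⟩

/-- realization: every `Aset` is achievable. -/
lemma Aset_realize (n : ℕ) (L : ℕ → ℕ → ℂ) (p u : ℕ) (hp2 : 2 ≤ p) (hpn : p ≤ n) (w : ℤ) :
    ∃ z : ℕ → ℕ → ℤ, (∀ j, z n j = 0) ∧ Aset L p u w = OmegaPlusPU L z p u := by
  classical
  refine ⟨fun a b => if a = p - 1 ∧ b = u then w else 0, fun j => ?_, ?_⟩
  · have : ¬ (n = p - 1 ∧ j = u) := by rintro ⟨h1, -⟩; omega
    simp [this]
  · rw [PU_eq]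
    ext t
    simp only [Aset, Set.mem_setOf_eq]
    have h1 : ((p - 1 = p - 1 ∧ u = u) : Prop) := ⟨rfl, rfl⟩
    have h2 : ¬ (p = p - 1 ∧ t.2.1 = u) := by rintro ⟨h, -⟩; omega
    simp only [if_neg h2, sub_zero]
    simp

/-- converse: each achievable set is an `Aset`. -/
lemma achievable_eq_Aset (n : ℕ) (hn : 2 ≤ n) (L : ℕ → ℕ → ℂ)
    (hgen : ∀ k i j, k ≤ n - 1 → 1 ≤ i → i ≤ k → 1 ≤ j → j ≤ k → i ≠ j →
      ¬ ∃ t : ℤ, L k i - L k j = (t : ℂ))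
    (p u : ℕ) (hp2 : 2 ≤ p) (hpn : p ≤ n)
    (z : ℕ → ℕ → ℤ) (hz : ∀ j, z n j = 0) :
    ∃ w : ℤ, OmegaPlusPU L z p u = Aset L p u w := by
  rcases eq_or_lt_of_le hpn with rfl | hlt
  · refine ⟨z (p - 1) u, ?_⟩
    rw [PU_eq]
    ext t
    simp only [Aset, Set.mem_setOf_eq, hz]
    constructor
    · rintro ⟨h1, h2, h3, h4⟩; exact ⟨h1, h2, h3, by omega⟩
    · rintro ⟨h1, h2, h3, h4⟩; exact ⟨h1, h2, h3, by omega⟩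
  · -- p < n : Sf has at most one element
    have huniq : ∀ s ∈ Sf L p u, ∀ s' ∈ Sf L p u, s = s' := by
      intro s hs s' hs'
      by_contra hne
      rw [mem_Sf] at hs hs'
      refine hgen p s s' (by omega) hs.1.1 hs.1.2 hs'.1.1 hs'.1.2 hne ?_
      refine ⟨tval L p u s - tval L p u s', ?_⟩
      push_cast
      linear_combination tval_spec hs.2 - tval_spec hs'.2
    by_cases hne : ∃ s₀, s₀ ∈ Sf L p u
    · obtain ⟨s₀, hs₀⟩ := hne
      refine ⟨if z (p-1) u - z p s₀ ≤ tval L p u s₀ then tval L p u s₀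
        else tval L p u s₀ + 1, ?_⟩
      rw [PU_eq]
      ext t
      simp only [Aset, Set.mem_setOf_eq]
      constructor
      · rintro ⟨h1, h2, h3, h4⟩
        have := huniq _ h3 _ hs₀
        subst this
        rw [if_pos h4]
        exact ⟨h1, h2, h3, le_refl _⟩
      · rintro ⟨h1, h2, h3, h4⟩
        have := huniq _ h3 _ hs₀
        subst this
        refine ⟨h1, h2, h3, ?_⟩
        by_cases hc : z (p-1) u - z p t.2.1 ≤ tval L p u t.2.1
        · exact hc
        · rw [if_neg hc] at h4; omega
    · refine ⟨0, ?_⟩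
      rw [PU_eq]
      ext t
      simp only [Aset, Set.mem_setOf_eq]
      constructor
      · rintro ⟨-, -, h3, -⟩; exact absurd ⟨t.2.1, h3⟩ hne
      · rintro ⟨-, -, h3, -⟩; exact absurd ⟨t.2.1, h3⟩ hne

lemma card_suffix (T : Finset ℤ) :
    Nat.card {U : Finset ℤ | ∃ w : ℤ, U = T.filter (fun t => w ≤ t)} = T.card + 1 := by
  classical
  induction T using Finset.strongInduction with
  | _ T ih =>
    rcases Finset.eq_empty_or_nonempty T with rfl | hne
    · have : {U : Finset ℤ | ∃ w : ℤ, U = Finset.filter (fun t => w ≤ t) ∅} = {∅} := by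
        ext U; simp
      rw [this]
      simp
    · set m := T.min' hne with hm
      have hmem : m ∈ T := T.min'_mem hne
      have hmin : ∀ t ∈ T, m ≤ t := fun t ht => T.min'_le t ht
      have hsub : T.erase m ⊂ T := Finset.erase_ssubset hmem
      have key : {U : Finset ℤ | ∃ w : ℤ, U = T.filter (fun t => w ≤ t)}
          = insert T {U : Finset ℤ | ∃ w : ℤ, U = (T.erase m).filter (fun t => w ≤ t)} := by
        ext U
        simp only [Set.mem_setOf_eq, Set.mem_insert_iff]
        constructor
        · rintro ⟨w, rfl⟩
          by_cases hw : w ≤ m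
          · left
            ext t; simp only [Finset.mem_filter]
            exact ⟨fun h => h.1, fun h => ⟨h, le_trans hw (hmin t h)⟩⟩
          · right
            refine ⟨w, ?_⟩
            ext t
            simp only [Finset.mem_filter, Finset.mem_erase]
            constructor
            · rintro ⟨ht, hwt⟩; exact ⟨⟨by omega, ht⟩, hwt⟩
            · rintro ⟨⟨-, ht⟩, hwt⟩; exact ⟨ht, hwt⟩
        · rintro (rfl | ⟨w, rfl⟩)
          · refine ⟨m, ?_⟩
            ext t
            simp only [Finset.mem_filter]
            exact ⟨fun h => ⟨h, hmin t h⟩, fun h => h.1⟩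
          · refine ⟨max w (m + 1), ?_⟩
            ext t
            simp only [Finset.mem_filter, Finset.mem_erase]
            constructor
            · rintro ⟨⟨htm, ht⟩, hwt⟩
              have := hmin t ht
              exact ⟨ht, by omega⟩
            · rintro ⟨ht, hwt⟩
              exact ⟨⟨by omega, ht⟩, by omega⟩
      rw [key]
      have hfin : {U : Finset ℤ | ∃ w : ℤ, U = (T.erase m).filter (fun t => w ≤ t)}.Finite := by
        apply Set.Finite.subset (T.erase m).powerset.finite_toSet
        rintro U ⟨w, rfl⟩
        exact Finset.mem_coe.mpr (Finset.mem_powerset.mpr (Finset.filter_subset _ _))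
      have hTnot : T ∉ {U : Finset ℤ | ∃ w : ℤ, U = (T.erase m).filter (fun t => w ≤ t)} := by
        rintro ⟨w, hw⟩
        have : m ∈ (T.erase m).filter (fun t => w ≤ t) := hw ▸ hmem
        simp at this
      rw [Nat.card_coe_set_eq, Set.ncard_insert_of_notMem hTnot hfin,
        ← Nat.card_coe_set_eq, ih _ hsub, Finset.card_erase_of_mem hmem]
      have : 1 ≤ T.card := Finset.card_pos.mpr hne
      omega

lemma D1 {L : ℕ → ℕ → ℂ} {p u : ℕ} {w w' : ℤ}
    (h : (Tset L p u).filter (fun t => w ≤ t) = (Tset L p u).filter (fun t => w' ≤ t)) :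
    Aset L p u w = Aset L p u w' := by
  classical
  ext x
  simp only [Aset, Set.mem_setOf_eq]
  have key : ∀ s ∈ Sf L p u, (w ≤ tval L p u s ↔ w' ≤ tval L p u s) := by
    intro s hs
    have hT : tval L p u s ∈ Tset L p u := Finset.mem_image_of_mem _ hs
    constructor
    · intro hw
      have : tval L p u s ∈ (Tset L p u).filter (fun t => w ≤ t) := by
        simp [Finset.mem_filter, hT, hw]
      rw [h] at this
      simpa using (Finset.mem_filter.mp this).2
    · intro hw
      have : tval L p u s ∈ (Tset L p u).filter (fun t => w' ≤ t) := by
        simp [Finset.mem_filter, hT, hw]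
      rw [← h] at this
      simpa using (Finset.mem_filter.mp this).2
  constructor
  · rintro ⟨h1, h2, h3, h4⟩; exact ⟨h1, h2, h3, (key _ h3).mp h4⟩
  · rintro ⟨h1, h2, h3, h4⟩; exact ⟨h1, h2, h3, (key _ h3).mpr h4⟩

lemma D2 {L : ℕ → ℕ → ℂ} {p u : ℕ} {w w' : ℤ}
    (h : Aset L p u w = Aset L p u w') :
    (Tset L p u).filter (fun t => w ≤ t) = (Tset L p u).filter (fun t => w' ≤ t) := by
  classical
  have key : ∀ v w₀ : ℤ, v ∈ (Tset L p u).filter (fun t => w₀ ≤ t) ↔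
      ∃ s, (p, s, u) ∈ Aset L p u w₀ ∧ tval L p u s = v := by
    intro v w₀
    constructor
    · intro hv
      obtain ⟨hvT, hw⟩ := Finset.mem_filter.mp hv
      obtain ⟨s, hs, rfl⟩ := Finset.mem_image.mp hvT
      exact ⟨s, ⟨rfl, rfl, hs, hw⟩, rfl⟩
    · rintro ⟨s, hmem, rfl⟩
      obtain ⟨-, -, hs, hw⟩ := hmem
      exact Finset.mem_filter.mpr ⟨Finset.mem_image_of_mem _ hs, hw⟩
  ext v
  rw [key, key]
  constructor
  · rintro ⟨s, hmem, rfl⟩; exact ⟨s, h ▸ hmem, rfl⟩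
  · rintro ⟨s, hmem, rfl⟩; exact ⟨s, h ▸ hmem, rfl⟩

/-- Part 1 counting. -/
lemma card_ach (n : ℕ) (hn : 2 ≤ n) (L : ℕ → ℕ → ℂ)
    (hgen : ∀ k i j, k ≤ n - 1 → 1 ≤ i → i ≤ k → 1 ≤ j → j ≤ k → i ≠ j →
      ¬ ∃ t : ℤ, L k i - L k j = (t : ℂ))
    (p u : ℕ) (hp2 : 2 ≤ p) (hpn : p ≤ n) :
    Nat.card {A : Set (ℕ × ℕ × ℕ) |
        ∃ z : ℕ → ℕ → ℤ, (∀ j, z n j = 0) ∧ A = OmegaPlusPU L z p u}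
      = (Tset L p u).card + 1 := by
  classical
  have hach : {A : Set (ℕ × ℕ × ℕ) |
      ∃ z : ℕ → ℕ → ℤ, (∀ j, z n j = 0) ∧ A = OmegaPlusPU L z p u}
      = {A | ∃ w : ℤ, A = Aset L p u w} := by
    ext A
    simp only [Set.mem_setOf_eq]
    constructor
    · rintro ⟨z, hz, rfl⟩
      obtain ⟨w, hw⟩ := achievable_eq_Aset n hn L hgen p u hp2 hpn z hz
      exact ⟨w, hw⟩
    · rintro ⟨w, rfl⟩
      obtain ⟨z, hz, hw⟩ := Aset_realize n L p u hp2 hpn w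
      exact ⟨z, hz, hw⟩
  rw [hach, ← card_suffix (Tset L p u)]
  apply Nat.card_eq_of_bijective
    (fun A => (⟨(Tset L p u).filter (fun t => A.2.choose ≤ t), A.2.choose, rfl⟩ :
      {U : Finset ℤ | ∃ w : ℤ, U = (Tset L p u).filter (fun t => w ≤ t)}))
  constructor
  · rintro ⟨A₁, h₁⟩ ⟨A₂, h₂⟩ hf
    have hfe : (Tset L p u).filter (fun t => h₁.choose ≤ t)
        = (Tset L p u).filter (fun t => h₂.choose ≤ t) := congrArg Subtype.val hf
    have := D1 hfe
    refine Subtype.ext ?_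
    show A₁ = A₂
    rw [h₁.choose_spec, h₂.choose_spec, this]
  · rintro ⟨U, hU⟩
    refine ⟨⟨Aset L p u hU.choose, hU.choose, rfl⟩, ?_⟩
    refine Subtype.ext ?_
    have hx : Aset L p u hU.choose = Aset L p u
        (Exists.choose (⟨hU.choose, rfl⟩ : ∃ w, Aset L p u hU.choose = Aset L p u w)) :=
      Exists.choose_spec (⟨hU.choose, rfl⟩ : ∃ w, Aset L p u hU.choose = Aset L p u w)
    have := D2 hx.symm
    simp only [this]
    exact hU.choose_spec.symm

lemma dPU_eq_card_Tset (L : ℕ → ℕ → ℂ) (p u : ℕ) :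
    dPU L p u = (Tset L p u).card := by
  classical
  have h1 : {v : ℂ | ∃ s, 1 ≤ s ∧ s ≤ p ∧ L p s = v ∧
      ∃ t : ℤ, L p s - L (p - 1) u = (t : ℂ)} = ↑((Sf L p u).image (L p)) := by
    ext v
    simp only [Set.mem_setOf_eq, Finset.coe_image, Set.mem_image, Finset.mem_coe, mem_Sf]
    constructor
    · rintro ⟨s, hs1, hs2, rfl, ht⟩
      exact ⟨s, ⟨⟨hs1, hs2⟩, ht⟩, rfl⟩
    · rintro ⟨s, ⟨⟨hs1, hs2⟩, ht⟩, rfl⟩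
      exact ⟨s, hs1, hs2, rfl, ht⟩
  have h2 : (Sf L p u).image (L p) = (Tset L p u).image (fun t : ℤ => L (p-1) u + (t:ℂ)) := by
    ext v
    simp only [Finset.mem_image, Tset]
    constructor
    · rintro ⟨s, hs, rfl⟩
      refine ⟨tval L p u s, ⟨s, hs, rfl⟩, ?_⟩
      have := tval_spec (mem_Sf.mp hs).2
      linear_combination -this
    · rintro ⟨t, ⟨s, hs, rfl⟩, rfl⟩
      refine ⟨s, hs, ?_⟩
      have := tval_spec (mem_Sf.mp hs).2
      linear_combination this
  have hinj : Function.Injective (fun t : ℤ => L (p-1) u + (t:ℂ)) := by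
    intro a b hab
    simp only [add_right_inj] at hab
    exact_mod_cast hab
  rw [dPU, h1, Nat.card_coe_set_eq, Set.ncard_coe_finset, h2,
    Finset.card_image_of_injective _ hinj]

lemma full_restrict (n : ℕ) (L : ℕ → ℕ → ℂ) (z : ℕ → ℕ → ℤ) (p u : ℕ)
    (hp2 : 2 ≤ p) (hpn : p ≤ n) (hu1 : 1 ≤ u) (hu : u ≤ p - 1) :
    OmegaPlusFull n L z ∩ {t | t.1 = p ∧ t.2.2 = u} = OmegaPlusPU L z p u := by
  ext t
  obtain ⟨a, b, c⟩ := t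
  simp only [OmegaPlusFull, OmegaPlusPU, Set.mem_inter_iff, Set.mem_setOf_eq]
  constructor
  · rintro ⟨⟨-, -, h3, h4, -, -, hm⟩, ⟨rfl, rfl⟩⟩
    exact ⟨rfl, rfl, h3, h4, hm⟩
  · rintro ⟨rfl, rfl, h3, h4, hm⟩
    exact ⟨⟨by omega, hpn, h3, h4, hu1, hu, hm⟩, rfl, rfl⟩

lemma Sf_subsingleton (n : ℕ) (L : ℕ → ℕ → ℂ)
    (hgen : ∀ k i j, k ≤ n - 1 → 1 ≤ i → i ≤ k → 1 ≤ j → j ≤ k → i ≠ j →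
      ¬ ∃ t : ℤ, L k i - L k j = (t : ℂ))
    (p u : ℕ) (hpn1 : p ≤ n - 1) :
    ∀ s ∈ Sf L p u, ∀ s' ∈ Sf L p u, s = s' := by
  intro s hs s' hs'
  by_contra hne
  rw [mem_Sf] at hs hs'
  refine hgen p s s' hpn1 hs.1.1 hs.1.2 hs'.1.1 hs'.1.2 hne ?_
  refine ⟨tval L p u s - tval L p u s', ?_⟩
  push_cast
  linear_combination tval_spec hs.2 - tval_spec hs'.2

open Classical in
noncomputable def stepz (L : ℕ → ℕ → ℂ) (Z : ℕ → ℕ → ℕ → ℕ → ℤ) (k : ℕ)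
    (prev : ℕ → ℤ) (u : ℕ) : ℤ :=
  if h : ∃ s, s ∈ Sf L (k+1) u then
    prev h.choose - (Z (k+1) u (k+1) h.choose - Z (k+1) u k u)
  else 0

noncomputable def rowsz (L : ℕ → ℕ → ℂ) (Z : ℕ → ℕ → ℕ → ℕ → ℤ) (n : ℕ) : ℕ → ℕ → ℤ
  | 0 => fun _ => 0
  | (i+1) => stepz L Z (n - i - 1) (rowsz L Z n i)

noncomputable def zc (L : ℕ → ℕ → ℂ) (Z : ℕ → ℕ → ℕ → ℕ → ℤ) (n k u : ℕ) : ℤ :=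
  if k < n then rowsz L Z n (n - k) u else 0

lemma zc_top (L : ℕ → ℕ → ℂ) (Z : ℕ → ℕ → ℕ → ℕ → ℤ) (n : ℕ) :
    ∀ j, zc L Z n n j = 0 := by
  intro j; simp [zc]

lemma zc_succ (L : ℕ → ℕ → ℂ) (Z : ℕ → ℕ → ℕ → ℕ → ℤ) {n k : ℕ} (hk : k < n) :
    (fun u => zc L Z n k u) = stepz L Z k (fun j => zc L Z n (k+1) j) := by
  have haux : rowsz L Z n (n - k - 1) = fun j => zc L Z n (k+1) j := by
    rcases eq_or_lt_of_le (Nat.succ_le_of_lt hk) with he | hlt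
    · have h0 : n - k - 1 = 0 := by omega
      rw [h0]
      funext j
      have : ¬ (k + 1 < n) := by omega
      simp [rowsz, zc, this]
    · funext j
      have h1 : n - (k+1) = n - k - 1 := by omega
      simp only [zc, if_pos hlt, h1]
  funext u
  have e1 : n - k = (n - k - 1) + 1 := by omega
  have e2 : n - (n - k - 1) - 1 = k := by omega
  rw [zc, if_pos hk, e1]
  show stepz L Z (n - (n - k - 1) - 1) (rowsz L Z n (n - k - 1)) u = _
  rw [e2, haux]

lemma zc_match (n : ℕ) (hn : 2 ≤ n) (L : ℕ → ℕ → ℂ)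
    (hgen : ∀ k i j, k ≤ n - 1 → 1 ≤ i → i ≤ k → 1 ≤ j → j ≤ k → i ≠ j →
      ¬ ∃ t : ℤ, L k i - L k j = (t : ℂ))
    (Z : ℕ → ℕ → ℕ → ℕ → ℤ) (hZtop : ∀ p u j, Z p u n j = 0)
    (p u : ℕ) (hp2 : 2 ≤ p) (hpn : p ≤ n) :
    ∀ s ∈ Sf L p u, zc L Z n p s - zc L Z n (p-1) u = Z p u p s - Z p u (p-1) u := by
  intro s hs
  obtain ⟨k, rfl⟩ : ∃ k, p = k + 1 := ⟨p - 1, by omega⟩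
  simp only [Nat.add_sub_cancel] at hs ⊢
  have hk : k < n := by omega
  have hzeq := congrFun (zc_succ L Z hk) u
  rw [stepz] at hzeq
  have hex : ∃ s, s ∈ Sf L (k+1) u := ⟨s, hs⟩
  rw [dif_pos hex] at hzeq
  have hs₀ : hex.choose ∈ Sf L (k+1) u := hex.choose_spec
  have key : zc L Z n (k+1) s - zc L Z n (k+1) hex.choose
      = Z (k+1) u (k+1) s - Z (k+1) u (k+1) hex.choose := by
    rcases eq_or_lt_of_le hpn with he | hlt
    · have h1 : ¬ (k + 1 < n) := by omega
      have hz1 : ∀ j, zc L Z n (k+1) j = 0 := by intro j; simp [zc, h1]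
      have hz2 : ∀ j, Z (k+1) u (k+1) j = 0 := by
        intro j
        have h3 := hZtop (k+1) u j
        rwa [← he] at h3
      rw [hz1 s, hz1 hex.choose, hz2 s, hz2 hex.choose]
    · have := Sf_subsingleton n L hgen (k+1) u (by omega) s hs hex.choose hs₀
      rw [this]
      ring
  omega


open Finset in
/-- Theorem 7.5: for a generic tableau `T(L)` of height `n`, the number of distinct
sets `Ω⁺_{p,u}(T(L+z))` equals `d_{pu}(T(L)) + 1`, and the number of distinct sets
`Ω⁺(T(L+z))` equals `∏_{1 ≤ u ≤ p-1 < n} (d_{pu}(T(L)) + 1)`. -/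
theorem number_of_irreducibles_in_generic_block
    (n : ℕ) (hn : 2 ≤ n) (L : ℕ → ℕ → ℂ)
    (hgen : ∀ k i j, k ≤ n - 1 → 1 ≤ i → i ≤ k → 1 ≤ j → j ≤ k → i ≠ j →
      ¬ ∃ t : ℤ, L k i - L k j = (t : ℂ)) :
    (∀ p u, 1 < p → p ≤ n → 1 ≤ u → u ≤ p - 1 →
      Nat.card {A : Set (ℕ × ℕ × ℕ) |
        ∃ z : ℕ → ℕ → ℤ, (∀ j, z n j = 0) ∧ A = OmegaPlusPU L z p u} = dPU L p u + 1) ∧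
    Nat.card {A : Set (ℕ × ℕ × ℕ) |
        ∃ z : ℕ → ℕ → ℤ, (∀ j, z n j = 0) ∧ A = OmegaPlusFull n L z} =
      ∏ p ∈ Icc 2 n, ∏ u ∈ Icc 1 (p - 1), (dPU L p u + 1) := by
  classical
  constructor
  · intro p u hp1 hpn hu1 hu2
    rw [card_ach n hn L hgen p u (by omega) hpn, dPU_eq_card_Tset]
  · set P : Finset ((_ : ℕ) × ℕ) := (Icc 2 n).sigma (fun p => Icc 1 (p - 1)) with hPdef
    have hmemP : ∀ i : (_ : ℕ) × ℕ,
        i ∈ P ↔ 2 ≤ i.1 ∧ i.1 ≤ n ∧ 1 ≤ i.2 ∧ i.2 ≤ i.1 - 1 := by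
      intro i
      simp [hPdef, Finset.mem_sigma, Finset.mem_Icc, and_assoc]
    set AchPU : ℕ → ℕ → Set (Set (ℕ × ℕ × ℕ)) := fun p u =>
      {A | ∃ z : ℕ → ℕ → ℤ, (∀ j, z n j = 0) ∧ A = OmegaPlusPU L z p u} with hAchPU
    set AchFull : Set (Set (ℕ × ℕ × ℕ)) :=
      {A | ∃ z : ℕ → ℕ → ℤ, (∀ j, z n j = 0) ∧ A = OmegaPlusFull n L z} with hAchFull
    have hF : ∀ A : ↥AchFull, ∀ i : ↥P,
        A.1 ∩ {t | t.1 = i.1.1 ∧ t.2.2 = i.1.2} ∈ AchPU i.1.1 i.1.2 := by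
      rintro ⟨A, hA⟩ ⟨i, hi⟩
      obtain ⟨zA, hzA, rfl⟩ := hA
      obtain ⟨h1, h2, h3, h4⟩ := (hmemP i).mp hi
      refine ⟨zA, hzA, ?_⟩
      show OmegaPlusFull n L zA ∩ {t | t.1 = i.1 ∧ t.2.2 = i.2} = OmegaPlusPU L zA i.1 i.2
      exact full_restrict n L zA i.1 i.2 h1 h2 h3 h4
    set F : ↥AchFull → (∀ i : ↥P, ↥(AchPU i.1.1 i.1.2)) := fun A i =>
      ⟨A.1 ∩ {t | t.1 = i.1.1 ∧ t.2.2 = i.1.2}, hF A i⟩ with hFdef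
    have hbij : Function.Bijective F := by
      constructor
      · have key : ∀ X Y : ↥AchFull, F X = F Y → ∀ t, t ∈ X.1 → t ∈ Y.1 := by
          rintro ⟨X, hX⟩ ⟨Y, hY⟩ hFXY t ht
          obtain ⟨zX, hzX, rfl⟩ := hX
          have htm : t ∈ OmegaPlusFull n L zX := ht
          rw [OmegaPlusFull, Set.mem_ofPred_eq] at htm
          obtain ⟨hb1, hb2, hb3, hb4, hb5, hb6, -⟩ := htm
          have hiP : (⟨t.1, t.2.2⟩ : (_ : ℕ) × ℕ) ∈ P :=
            (hmemP ⟨t.1, t.2.2⟩).mpr ⟨hb1, hb2, hb5, hb6⟩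
          have h := congrArg Subtype.val (congrFun hFXY ⟨⟨t.1, t.2.2⟩, hiP⟩)
          have h' := Set.ext_iff.mp h t
          have ht3 : t ∈ Y ∩ {x | x.1 = t.1 ∧ x.2.2 = t.2.2} := h'.mp ⟨ht, rfl, rfl⟩
          exact ht3.1
        intro X Y h
        exact Subtype.ext (Set.Subset.antisymm (key X Y h) (key Y X h.symm))
      · intro g
        have hgspec : ∀ i : ↥P, ∃ z : ℕ → ℕ → ℤ, (∀ j, z n j = 0) ∧
            (g i).1 = OmegaPlusPU L z i.1.1 i.1.2 := fun i => (g i).2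
        set Z : ℕ → ℕ → ℕ → ℕ → ℤ := fun p u =>
          if h : (⟨p, u⟩ : (_ : ℕ) × ℕ) ∈ P then (hgspec ⟨⟨p, u⟩, h⟩).choose
          else fun _ _ => 0 with hZdef
        have hZtop : ∀ p u j, Z p u n j = 0 := by
          intro p u j
          simp only [hZdef]
          split_ifs with h
          · exact ((hgspec ⟨⟨p, u⟩, h⟩).choose_spec).1 j
          · rfl
        have hZspec : ∀ (p u : ℕ) (h : (⟨p, u⟩ : (_ : ℕ) × ℕ) ∈ P),
            (g ⟨⟨p, u⟩, h⟩).1 = OmegaPlusPU L (Z p u) p u := by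
          intro p u h
          simp only [hZdef, dif_pos h]
          exact ((hgspec ⟨⟨p, u⟩, h⟩).choose_spec).2
        refine ⟨⟨OmegaPlusFull n L (zc L Z n), zc L Z n, zc_top L Z n, rfl⟩, ?_⟩
        funext i
        apply Subtype.ext
        obtain ⟨⟨p, u⟩, hi⟩ := i
        obtain ⟨h1, h2, h3, h4⟩ := (hmemP ⟨p, u⟩).mp hi
        show OmegaPlusFull n L (zc L Z n) ∩ {t | t.1 = p ∧ t.2.2 = u} = (g ⟨⟨p, u⟩, hi⟩).1
        rw [full_restrict n L (zc L Z n) p u h1 h2 h3 h4]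
        rw [PU_congr L (zc L Z n) (Z p u) p u
          (zc_match n hn L hgen Z hZtop p u h1 h2)]
        exact (hZspec p u hi).symm
    rw [Nat.card_eq_of_bijective F hbij, Nat.card_pi]
    have hstep : ∀ i : ↥P, Nat.card ↥(AchPU i.1.1 i.1.2)
        = (fun i : (_ : ℕ) × ℕ => dPU L i.1 i.2 + 1) i.1 := by
      rintro ⟨i, hi⟩
      obtain ⟨h1, h2, -, -⟩ := (hmemP i).mp hi
      simp only [hAchPU]
      rw [card_ach n hn L hgen i.1 i.2 h1 h2, dPU_eq_card_Tset]
    rw [Finset.prod_congr rfl (fun i _ => hstep i)]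
    rw [Finset.prod_coe_sort P (fun i : (_ : ℕ) × ℕ => dPU L i.1 i.2 + 1)]
    rw [hPdef, Finset.prod_sigma]
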